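/- Let γ ∈ (0,1], σ > 0, and define W₋(x) = (γ(σ - 3x²) - √(γ²(σ + x²)² + 4γx²))/(2γx) for x ≠ 0. Then W₋ is strictly decreasing on (-∞,0) and on (0,∞); consequently, for each a ∈ ℝ the equation W₋(x) = a has at most one solution on each half-line. -/

import Mathlib

theorem stmt_11 (γ σ : ℝ) (hγ0 : 0 < γ) (hγ1 : γ ≤ 1) (hσ : 0 < σ) :
    let W : ℝ → ℝ := fun x =>
      (γ * (σ - 3 * x ^ 2) - Real.sqrt (γ ^ 2 * (σ + x ^ 2) ^ 2 + 4 * γ * x ^ 2)) / (2 * γ * x)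
    StrictAntiOn W (Set.Iio 0) ∧ StrictAntiOn W (Set.Ioi 0) ∧
      (∀ a x y : ℝ, x ∈ Set.Iio (0:ℝ) → y ∈ Set.Iio (0:ℝ) → W x = a → W y = a → x = y) ∧
      (∀ a x y : ℝ, x ∈ Set.Ioi (0:ℝ) → y ∈ Set.Ioi (0:ℝ) → W x = a → W y = a → x = y) := by
  intro W
  have hQ : ∀ x : ℝ, 0 < γ ^ 2 * (σ + x ^ 2) ^ 2 + 4 * γ * x ^ 2 := by
    intro x
    have h1 : 0 < σ + x ^ 2 := by positivity
    have h2 : 0 ≤ 4 * γ * x ^ 2 := by positivity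
    nlinarith [mul_pos (mul_pos hγ0 hγ0) (mul_pos h1 h1)]
  have hderiv : ∀ x : ℝ, x ≠ 0 → ∃ d, HasDerivAt W d x ∧ d < 0 := by
    intro x hx
    set Q : ℝ := γ ^ 2 * (σ + x ^ 2) ^ 2 + 4 * γ * x ^ 2 with hQdef
    set s : ℝ := Real.sqrt Q with hsdef
    have hs0 : 0 < s := Real.sqrt_pos.mpr (hQ x)
    have hsq : s ^ 2 = Q := Real.sq_sqrt (hQ x).le
    have hx2 : HasDerivAt (fun x : ℝ => x ^ 2) (2 * x) x := by
      simpa using hasDerivAt_pow 2 x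
    have hsum : HasDerivAt (fun x : ℝ => σ + x ^ 2) (2 * x) x := hx2.const_add σ
    have hQd : HasDerivAt (fun x : ℝ => γ ^ 2 * (σ + x ^ 2) ^ 2 + 4 * γ * x ^ 2)
        (γ ^ 2 * (2 * (σ + x ^ 2) ^ 1 * (2 * x)) + 4 * γ * (2 * x)) x := by
      exact ((hsum.pow 2).const_mul (γ ^ 2)).add (hx2.const_mul (4 * γ))
    have hsqrt : HasDerivAt (fun x : ℝ => Real.sqrt (γ ^ 2 * (σ + x ^ 2) ^ 2 + 4 * γ * x ^ 2))
        ((γ ^ 2 * (2 * (σ + x ^ 2) ^ 1 * (2 * x)) + 4 * γ * (2 * x)) / (2 * s)) x :=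
      hQd.sqrt (hQ x).ne'
    have hnum : HasDerivAt (fun x : ℝ => γ * (σ - 3 * x ^ 2) -
        Real.sqrt (γ ^ 2 * (σ + x ^ 2) ^ 2 + 4 * γ * x ^ 2))
        (γ * (-(3 * (2 * x))) - (γ ^ 2 * (2 * (σ + x ^ 2) ^ 1 * (2 * x)) + 4 * γ * (2 * x)) / (2 * s)) x :=
      (((hx2.const_mul 3).const_sub σ).const_mul γ).sub hsqrt
    have hden : HasDerivAt (fun x : ℝ => 2 * γ * x) (2 * γ) x := by
      simpa using (hasDerivAt_id x).const_mul (2 * γ)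
    have hdne : 2 * γ * x ≠ 0 := mul_ne_zero (by positivity) hx
    have hW : HasDerivAt W
        (((γ * (-(3 * (2 * x))) - (γ ^ 2 * (2 * (σ + x ^ 2) ^ 1 * (2 * x)) + 4 * γ * (2 * x)) / (2 * s)) * (2 * γ * x)
          - (γ * (σ - 3 * x ^ 2) - s) * (2 * γ)) / (2 * γ * x) ^ 2) x := by
      exact hnum.div hden hdne
    refine ⟨_, hW, ?_⟩
    -- show the derivative is negative
    have hkey : γ * (σ + x ^ 2) * (σ - x ^ 2) < s * (σ + 3 * x ^ 2) := by
      have h1 : γ * (σ + x ^ 2) < s := by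
        rw [hsdef]
        rw [show Q = γ ^ 2 * (σ + x ^ 2) ^ 2 + 4 * γ * x ^ 2 from rfl]
        refine (Real.lt_sqrt (by positivity)).mpr ?_
        have : 0 < x ^ 2 := by positivity
        nlinarith
      have h2 : (0:ℝ) < σ + 3 * x ^ 2 := by positivity
      have hx2p : 0 < x ^ 2 := lt_of_le_of_ne (sq_nonneg x) (Ne.symm (pow_ne_zero 2 hx))
      have h3 : σ - x ^ 2 < σ + 3 * x ^ 2 := by nlinarith
      have hgp : 0 < γ * (σ + x ^ 2) := by positivity
      calc γ * (σ + x ^ 2) * (σ - x ^ 2) < γ * (σ + x ^ 2) * (σ + 3 * x ^ 2) := by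
            have hx2p : 0 < x ^ 2 := by positivity
            nlinarith
        _ < s * (σ + 3 * x ^ 2) := by nlinarith
    apply div_neg_of_neg_of_pos
    · -- numerator < 0
      have hNmul : ((γ * (-(3 * (2 * x))) - (γ ^ 2 * (2 * (σ + x ^ 2) ^ 1 * (2 * x)) + 4 * γ * (2 * x)) / (2 * s)) * (2 * γ * x)
          - (γ * (σ - 3 * x ^ 2) - s) * (2 * γ)) * (2 * s)
          = 4 * γ ^ 2 * (γ * (σ + x ^ 2) * (σ - x ^ 2) - s * (σ + 3 * x ^ 2)) := by
        field_simp
        ring_nf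
        nlinarith [hsq]
      have hlt : ((γ * (-(3 * (2 * x))) - (γ ^ 2 * (2 * (σ + x ^ 2) ^ 1 * (2 * x)) + 4 * γ * (2 * x)) / (2 * s)) * (2 * γ * x)
          - (γ * (σ - 3 * x ^ 2) - s) * (2 * γ)) * (2 * s) < 0 := by
        rw [hNmul]
        have h0 : γ * (σ + x ^ 2) * (σ - x ^ 2) - s * (σ + 3 * x ^ 2) < 0 := by linarith
        exact mul_neg_of_pos_of_neg (by positivity) h0
      nlinarith [hs0]
    · positivity
  -- now conclude
  have hcont : ∀ x : ℝ, x ≠ 0 → ContinuousAt W x := by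
    intro x hx
    obtain ⟨d, hd, _⟩ := hderiv x hx
    exact hd.differentiableAt.continuousAt
  have hanti1 : StrictAntiOn W (Set.Iio 0) := by
    apply strictAntiOn_of_deriv_neg (convex_Iio 0)
    · exact fun x hx => (hcont x (ne_of_lt hx)).continuousWithinAt
    · intro x hx
      rw [interior_Iio] at hx
      obtain ⟨d, hd, hdn⟩ := hderiv x (ne_of_lt hx)
      rwa [hd.deriv]
  have hanti2 : StrictAntiOn W (Set.Ioi 0) := by
    apply strictAntiOn_of_deriv_neg (convex_Ioi 0)
    · exact fun x hx => (hcont x (ne_of_gt hx)).continuousWithinAt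
    · intro x hx
      rw [interior_Ioi] at hx
      obtain ⟨d, hd, hdn⟩ := hderiv x (ne_of_gt hx)
      rwa [hd.deriv]
  refine ⟨hanti1, hanti2, ?_, ?_⟩
  · intro a x y hxm hym hxa hya
    exact hanti1.injOn hxm hym (hxa.trans hya.symm)
  · intro a x y hxm hym hxa hya
    exact hanti2.injOn hxm hym (hxa.trans hya.symm)
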